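/- Let $h_{N} = \cosh_{\eta_N}(v) + \sinh_{\eta_N}(\bar{v})$ and $h = \cosh_{\eta}(v) + \sinh_{\eta}(\bar{v})$ for a vector $v$ in a Hilbert space $H$ with conjugation $J$ ($\bar{v} = Jv$) and Hilbert-Schmidt operators $\eta_N, \eta$ with $\|\eta_N\|_{HS}, \|\eta\|_{HS} \le R$. Then there exists $C = C(R)$ such that $\|h_N - h\| \le C\,\|v\|\,\|\eta_N - \eta\|_{HS}$. -/

import Mathlib

open scoped ENNReal

/-- The Hilbert-Schmidt norm of an operator `T`, computed with respect to a
Hilbert basis `b` of the (separable) Hilbert space `H`. -/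
noncomputable def hsNorm {ι H : Type*} [NormedAddCommGroup H] [InnerProductSpace ℂ H]
    [CompleteSpace H] (b : HilbertBasis ι ℂ H) (T : H →L[ℂ] H) : ℝ≥0∞ :=
  (∑' i, (‖T (b i)‖₊ : ℝ≥0∞) ^ 2) ^ ((1 : ℝ) / 2)

/-- `cosh_η = ∑_{n ≥ 0} (1/(2n)!) (η η̄)^n`, where `η̄` is the conjugate of `η`. -/
noncomputable def coshOp {H : Type*} [NormedAddCommGroup H] [InnerProductSpace ℂ H]
    [CompleteSpace H] (η ηbar : H →L[ℂ] H) : H →L[ℂ] H :=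
  ∑' n : ℕ, (((2 * n).factorial : ℝ)⁻¹) • (η * ηbar) ^ n

/-- `sinh_η = ∑_{n ≥ 0} (1/(2n+1)!) (η η̄)^n η`. -/
noncomputable def sinhOp {H : Type*} [NormedAddCommGroup H] [InnerProductSpace ℂ H]
    [CompleteSpace H] (η ηbar : H →L[ℂ] H) : H →L[ℂ] H :=
  ∑' n : ℕ, (((2 * n + 1).factorial : ℝ)⁻¹) • ((η * ηbar) ^ n * η)

section Helpers
variable {ι H : Type*} [NormedAddCommGroup H] [InnerProductSpace ℂ H]
    [CompleteSpace H]

lemma hs_sum_eq (b : HilbertBasis ι ℂ H) (T : H →L[ℂ] H) :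
    ∑' i, (‖T (b i)‖₊ : ℝ≥0∞) ^ 2 = ∑' i, (↑(‖T (b i)‖₊ ^ 2) : ℝ≥0∞) := by
  simp [ENNReal.coe_pow]

lemma hs_ne_top_iff (b : HilbertBasis ι ℂ H) (T : H →L[ℂ] H) :
    hsNorm b T ≠ ⊤ ↔ Summable (fun i => ‖T (b i)‖₊ ^ 2) := by
  rw [hsNorm, ← ENNReal.tsum_coe_ne_top_iff_summable, ← hs_sum_eq,
    Ne, ENNReal.rpow_eq_top_iff_of_pos (by norm_num)]

lemma hs_toReal (b : HilbertBasis ι ℂ H) (T : H →L[ℂ] H)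
    (h : Summable (fun i => ‖T (b i)‖₊ ^ 2)) :
    (hsNorm b T).toReal = (∑' i, ‖T (b i)‖ ^ 2) ^ ((1 : ℝ)/2) := by
  rw [hsNorm, hs_sum_eq, ← ENNReal.coe_tsum h, ← ENNReal.toReal_rpow]
  congr 1
  rw [ENNReal.coe_toReal, NNReal.coe_tsum]
  push_cast
  rfl

lemma opNorm_le_hsNorm (b : HilbertBasis ι ℂ H) (T : H →L[ℂ] H)
    (h : hsNorm b T ≠ ⊤) : ‖T‖ ≤ (hsNorm b T).toReal := by
  have hsq : Summable (fun i => ‖T (b i)‖₊ ^ 2) := (hs_ne_top_iff b T).mp h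
  have hr : Summable (fun i => ‖T (b i)‖ ^ 2) := by
    have := NNReal.summable_coe.mpr hsq
    simpa using this
  have htwo : (0:ℝ) < (2:ℝ≥0∞).toReal := by norm_num
  have hmem : Memℓp (fun i : ι => (‖T (b i)‖ : ℂ)) 2 := by
    apply memℓp_gen
    have : ((2:ℝ≥0∞)).toReal = ((2:ℕ):ℝ) := by norm_num
    rw [this]
    simp only [Real.rpow_natCast, Complex.norm_real, norm_norm]
    exact_mod_cast hr
  set g : lp (fun _ : ι => ℂ) 2 := ⟨_, hmem⟩ with hg
  have hgnorm : ‖g‖ = (∑' i, ‖T (b i)‖ ^ 2) ^ ((1 : ℝ)/2) := by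
    rw [lp.norm_eq_tsum_rpow htwo g]
    have h2 : ((2:ℝ≥0∞)).toReal = ((2:ℕ):ℝ) := by norm_num
    rw [h2]
    norm_num [Real.rpow_natCast, Complex.norm_real, norm_norm, hg]
  have hkey : (hsNorm b T).toReal = ‖g‖ := by rw [hs_toReal b T hsq, hgnorm]
  rw [hkey]
  refine T.opNorm_le_bound (norm_nonneg g) (fun x => ?_)
  have h2 : HasSum (fun i => b.repr x i • T (b i)) (T x) := by
    have := (b.hasSum_repr x).mapL T
    simpa [map_smul] using this
  have hpq : ((2:ℝ≥0∞)).toReal.HolderConjugate (2:ℝ≥0∞).toReal := by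
    rw [Real.holderConjugate_iff] <;> norm_num
  obtain ⟨hsum, hle⟩ := lp.tsum_mul_le_mul_norm hpq (b.repr x) g
  have hb : ∀ i, ‖b.repr x i • T (b i)‖ ≤ ‖(b.repr x) i‖ * ‖g i‖ := by
    intro i
    rw [norm_smul]
    simp [hg, Complex.norm_real, norm_norm]
  calc ‖T x‖ ≤ ∑' i, ‖(b.repr x) i‖ * ‖g i‖ := by
        rw [← h2.tsum_eq]
        exact tsum_of_norm_bounded hsum.hasSum hb
    _ ≤ ‖b.repr x‖ * ‖g‖ := hle
    _ = ‖g‖ * ‖x‖ := by rw [b.repr.norm_map x, mul_comm]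

lemma clm_norm_pow_le {c : ℝ} (hc : 1 ≤ c) (B : H →L[ℂ] H) (hB : ‖B‖ ≤ c) (n : ℕ) :
    ‖B ^ n‖ ≤ c ^ n := by
  induction n with
  | zero =>
    simp only [pow_zero]
    exact ContinuousLinearMap.opNorm_le_bound _ zero_le_one (fun x => by simp)
  | succ n ih =>
    rw [pow_succ, pow_succ]
    exact le_trans (norm_mul_le _ _)
      (mul_le_mul ih hB (norm_nonneg _) (pow_nonneg (le_trans zero_le_one hc) n))

lemma clm_pow_sub_pow_le {c d : ℝ} (hc : 1 ≤ c) (A B : H →L[ℂ] H) (hA : ‖A‖ ≤ c)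
    (hB : ‖B‖ ≤ c) (hd : ‖A - B‖ ≤ d) (n : ℕ) :
    ‖A ^ n - B ^ n‖ ≤ n * c ^ n * d := by
  have hd0 : 0 ≤ d := le_trans (norm_nonneg _) hd
  have hc0 : (0:ℝ) ≤ c := le_trans zero_le_one hc
  induction n with
  | zero => simp
  | succ n ih =>
    have hid : A ^ (n + 1) - B ^ (n + 1) = A * (A ^ n - B ^ n) + (A - B) * B ^ n := by
      rw [pow_succ', pow_succ']
      noncomm_ring
    rw [hid]
    have h1 : ‖A * (A ^ n - B ^ n)‖ ≤ c * (n * c ^ n * d) :=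
      le_trans (norm_mul_le _ _) (mul_le_mul hA ih (norm_nonneg _) hc0)
    have h2 : ‖(A - B) * B ^ n‖ ≤ d * c ^ n :=
      le_trans (norm_mul_le _ _)
        (mul_le_mul hd (clm_norm_pow_le hc B hB n) (norm_nonneg _) hd0)
    refine le_trans (norm_add_le _ _) (le_trans (add_le_add h1 h2) ?_)
    have hcn : c ^ n ≤ c ^ (n + 1) := by
      calc c ^ n = 1 * c ^ n := (one_mul _).symm
        _ ≤ c * c ^ n := by gcongr
        _ = c ^ (n + 1) := (pow_succ' c n).symm
    push_cast
    have : c * (n * c ^ n * d) = n * c ^ (n+1) * d := by ring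
    rw [this]
    nlinarith [pow_nonneg hc0 n, pow_nonneg hc0 (n+1)]

lemma hs_sub_ne_top (b : HilbertBasis ι ℂ H) (S T : H →L[ℂ] H)
    (hS : hsNorm b S ≠ ⊤) (hT : hsNorm b T ≠ ⊤) : hsNorm b (S - T) ≠ ⊤ := by
  rw [hs_ne_top_iff] at hS hT ⊢
  have hsum : Summable (fun i => 2 * ‖S (b i)‖₊ ^ 2 + 2 * ‖T (b i)‖₊ ^ 2) :=
    ((hS.mul_left 2).add (hT.mul_left 2))
  refine NNReal.summable_of_le (fun i => ?_) hsum
  have h1 : ‖(S - T) (b i)‖₊ ≤ ‖S (b i)‖₊ + ‖T (b i)‖₊ := by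
    simpa using nnnorm_sub_le (S (b i)) (T (b i))
  calc ‖(S - T) (b i)‖₊ ^ 2 ≤ (‖S (b i)‖₊ + ‖T (b i)‖₊) ^ 2 := by gcongr
    _ ≤ 2 * ‖S (b i)‖₊ ^ 2 + 2 * ‖T (b i)‖₊ ^ 2 := by
        rw [← NNReal.coe_le_coe]
        push_cast
        nlinarith [sq_nonneg (‖S (b i)‖ - ‖T (b i)‖)]

end Helpers


set_option maxHeartbeats 1000000 in
set_option synthInstance.maxHeartbeats 400000 in
/-- Stability of Bogoliubov-transformed test functions
`h_N = cosh_{η_N}(v) + sinh_{η_N}(v̄)`, `h = cosh_η(v) + sinh_η(v̄)` under perturbation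
of the Hilbert-Schmidt kernel: if `‖η_N‖_HS, ‖η‖_HS ≤ R` then there is `C = C(R)` with
`‖h_N - h‖ ≤ C ‖v‖ ‖η_N - η‖_HS`.  Here `v̄ = Jv` with `J` the conjugation, so
`‖v̄‖ = ‖v‖`, and the conjugate kernels `η̄` satisfy `‖η̄‖_HS = ‖η‖_HS` and
`‖η̄_N - η̄‖_HS = ‖η_N - η‖_HS`. -/
theorem bogoliubov_test_function_stability {ι H : Type*} [NormedAddCommGroup H]
    [InnerProductSpace ℂ H] [CompleteSpace H] [Countable ι] (R : ℝ) (hR : 0 ≤ R) :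
    ∃ C : ℝ, 0 < C ∧
      ∀ (b : HilbertBasis ι ℂ H) (v vb : H) (ηN ηNbar η ηbar : H →L[ℂ] H),
        ‖vb‖ = ‖v‖ →
        hsNorm b ηN ≤ ENNReal.ofReal R → hsNorm b η ≤ ENNReal.ofReal R →
        hsNorm b ηNbar = hsNorm b ηN → hsNorm b ηbar = hsNorm b η →
        hsNorm b (ηNbar - ηbar) = hsNorm b (ηN - η) →
        ‖(coshOp ηN ηNbar) v + (sinhOp ηN ηNbar) vb
            - ((coshOp η ηbar) v + (sinhOp η ηbar) vb)‖
          ≤ C * ‖v‖ * (hsNorm b (ηN - η)).toReal := by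
  set M := R + 1 with hMdef
  have hM1 : (1:ℝ) ≤ M := by simp [hMdef]; linarith
  have hM0 : (0:ℝ) < M := by linarith
  have hc1 : (1:ℝ) ≤ M ^ 2 := by nlinarith
  have hEsum : Summable (fun n : ℕ => (2 * M ^ 2) ^ n / n.factorial) :=
    Real.summable_pow_div_factorial _
  set E := ∑' n : ℕ, (2 * M ^ 2) ^ n / n.factorial with hEdef
  have hE1 : (1:ℝ) ≤ E := by
    have h0 := Summable.le_tsum hEsum 0 (fun j _ => by positivity)
    simpa using h0
  have hMsum : Summable (fun n : ℕ => (M ^ 2) ^ n / n.factorial) :=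
    Real.summable_pow_div_factorial _
  refine ⟨(2 * M + 2 * M ^ 2) * E, by nlinarith, ?_⟩
  intro b v vb ηN ηNbar η ηbar hvb hηN hη hbarN hbarh hbardiff
  have hRne : ENNReal.ofReal R ≠ ⊤ := ENNReal.ofReal_ne_top
  have hfinN : hsNorm b ηN ≠ ⊤ := ne_top_of_le_ne_top hRne hηN
  have hfin : hsNorm b η ≠ ⊤ := ne_top_of_le_ne_top hRne hη
  have hfinNbar : hsNorm b ηNbar ≠ ⊤ := hbarN ▸ hfinN
  have hfinbar : hsNorm b ηbar ≠ ⊤ := hbarh ▸ hfin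
  have hfindiff : hsNorm b (ηN - η) ≠ ⊤ := hs_sub_ne_top b ηN η hfinN hfin
  have hfinbardiff : hsNorm b (ηNbar - ηbar) ≠ ⊤ := hbardiff ▸ hfindiff
  set D := (hsNorm b (ηN - η)).toReal with hDdef
  have hD0 : (0:ℝ) ≤ D := ENNReal.toReal_nonneg
  have htR : ∀ (T : H →L[ℂ] H), hsNorm b T ≤ ENNReal.ofReal R → ‖T‖ ≤ M := by
    intro T hT
    have h1 := opNorm_le_hsNorm b T (ne_top_of_le_ne_top hRne hT)
    have h2 : (hsNorm b T).toReal ≤ R := by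
      have := ENNReal.toReal_mono hRne hT
      rwa [ENNReal.toReal_ofReal hR] at this
    linarith
  have hNle : ‖ηN‖ ≤ M := htR ηN hηN
  have hle : ‖η‖ ≤ M := htR η hη
  have hNbarle : ‖ηNbar‖ ≤ M := htR ηNbar (hbarN ▸ hηN)
  have hbarle : ‖ηbar‖ ≤ M := htR ηbar (hbarh ▸ hη)
  have hdiff : ‖ηN - η‖ ≤ D := opNorm_le_hsNorm b _ hfindiff
  have hbdiff : ‖ηNbar - ηbar‖ ≤ D := by
    have := opNorm_le_hsNorm b _ hfinbardiff
    rwa [hbardiff] at this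
  set A := ηN * ηNbar with hAdef
  set B := η * ηbar with hBdef
  have hAn : ‖A‖ ≤ M ^ 2 := by
    refine le_trans (norm_mul_le _ _) ?_
    rw [sq]
    exact mul_le_mul hNle hNbarle (norm_nonneg _) (le_of_lt hM0)
  have hBn : ‖B‖ ≤ M ^ 2 := by
    refine le_trans (norm_mul_le _ _) ?_
    rw [sq]
    exact mul_le_mul hle hbarle (norm_nonneg _) (le_of_lt hM0)
  have hABid : A - B = ηN * (ηNbar - ηbar) + (ηN - η) * ηbar := by
    rw [hAdef, hBdef]; noncomm_ring
  have hABd : ‖A - B‖ ≤ 2 * M * D := by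
    rw [hABid]
    refine le_trans (norm_add_le _ _) ?_
    have h1 : ‖ηN * (ηNbar - ηbar)‖ ≤ M * D :=
      le_trans (norm_mul_le _ _) (mul_le_mul hNle hbdiff (norm_nonneg _) (le_of_lt hM0))
    have h2 : ‖(ηN - η) * ηbar‖ ≤ D * M :=
      le_trans (norm_mul_le _ _) (mul_le_mul hdiff hbarle (norm_nonneg _) hD0)
    linarith
  -- factorial and power facts
  have hfact2 : ∀ n : ℕ, ((2 * n).factorial : ℝ)⁻¹ ≤ (n.factorial : ℝ)⁻¹ := by
    intro n
    apply inv_anti₀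
    · exact_mod_cast n.factorial_pos
    · exact_mod_cast Nat.factorial_le (by omega)
  have hfact3 : ∀ n : ℕ, ((2 * n + 1).factorial : ℝ)⁻¹ ≤ (n.factorial : ℝ)⁻¹ := by
    intro n
    apply inv_anti₀
    · exact_mod_cast n.factorial_pos
    · exact_mod_cast Nat.factorial_le (by omega)
  have h2pow : ∀ n : ℕ, (n:ℝ) + 1 ≤ 2 ^ n := by
    intro n
    exact_mod_cast (Nat.lt_two_pow_self (n := n))
  -- summability of the operator series
  have habs2 : ∀ n : ℕ, |((2 * n).factorial : ℝ)⁻¹| = ((2 * n).factorial : ℝ)⁻¹ := by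
    intro n; rw [abs_of_nonneg]; positivity
  have habs3 : ∀ n : ℕ, |((2 * n + 1).factorial : ℝ)⁻¹| = ((2 * n + 1).factorial : ℝ)⁻¹ := by
    intro n; rw [abs_of_nonneg]; positivity
  have hpowbound : ∀ (X : H →L[ℂ] H), ‖X‖ ≤ M ^ 2 → ∀ n : ℕ,
      Summable (fun n : ℕ => (((2 * n).factorial : ℝ)⁻¹) • X ^ n) := by
    intro X hX _
    refine Summable.of_norm_bounded hMsum (fun n => ?_)
    rw [norm_smul, Real.norm_eq_abs, habs2 n]
    calc ((2 * n).factorial : ℝ)⁻¹ * ‖X ^ n‖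
        ≤ (n.factorial : ℝ)⁻¹ * (M ^ 2) ^ n :=
          mul_le_mul (hfact2 n) (clm_norm_pow_le hc1 X hX n) (norm_nonneg _) (by positivity)
      _ = (M ^ 2) ^ n / n.factorial := by ring
  have hAsum := hpowbound A hAn 0
  have hBsum := hpowbound B hBn 0
  have hAsum' : Summable (fun n : ℕ => (((2 * n + 1).factorial : ℝ)⁻¹) • (A ^ n * ηN)) := by
    refine Summable.of_norm_bounded (hMsum.mul_left M) (fun n => ?_)
    rw [norm_smul, Real.norm_eq_abs, habs3 n]
    calc ((2 * n + 1).factorial : ℝ)⁻¹ * ‖A ^ n * ηN‖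
        ≤ (n.factorial : ℝ)⁻¹ * ((M ^ 2) ^ n * M) := by
          refine mul_le_mul (hfact3 n) ?_ (norm_nonneg _) (by positivity)
          exact le_trans (norm_mul_le _ _)
            (mul_le_mul (clm_norm_pow_le hc1 A hAn n) hNle (norm_nonneg _) (by positivity))
      _ = M * ((M ^ 2) ^ n / n.factorial) := by ring
  have hBsum' : Summable (fun n : ℕ => (((2 * n + 1).factorial : ℝ)⁻¹) • (B ^ n * η)) := by
    refine Summable.of_norm_bounded (hMsum.mul_left M) (fun n => ?_)
    rw [norm_smul, Real.norm_eq_abs, habs3 n]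
    calc ((2 * n + 1).factorial : ℝ)⁻¹ * ‖B ^ n * η‖
        ≤ (n.factorial : ℝ)⁻¹ * ((M ^ 2) ^ n * M) := by
          refine mul_le_mul (hfact3 n) ?_ (norm_nonneg _) (by positivity)
          exact le_trans (norm_mul_le _ _)
            (mul_le_mul (clm_norm_pow_le hc1 B hBn n) hle (norm_nonneg _) (by positivity))
      _ = M * ((M ^ 2) ^ n / n.factorial) := by ring
  -- per-term difference bounds
  have hterm1 : ∀ n : ℕ,
      ‖(((2 * n).factorial : ℝ)⁻¹) • A ^ n - (((2 * n).factorial : ℝ)⁻¹) • B ^ n‖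
        ≤ 2 * M * D * ((2 * M ^ 2) ^ n / n.factorial) := by
    intro n
    rw [← smul_sub, norm_smul, Real.norm_eq_abs, habs2 n]
    have hpows := clm_pow_sub_pow_le hc1 A B hAn hBn hABd n
    calc ((2 * n).factorial : ℝ)⁻¹ * ‖A ^ n - B ^ n‖
        ≤ (n.factorial : ℝ)⁻¹ * ((n : ℝ) * (M ^ 2) ^ n * (2 * M * D)) :=
          mul_le_mul (hfact2 n) hpows (norm_nonneg _) (by positivity)
      _ ≤ (n.factorial : ℝ)⁻¹ * ((2:ℝ) ^ n * (M ^ 2) ^ n * (2 * M * D)) := by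
          have : (n:ℝ) ≤ 2 ^ n := le_trans (by linarith) (h2pow n)
          gcongr
      _ = 2 * M * D * ((2 * M ^ 2) ^ n / n.factorial) := by
          rw [mul_pow]; ring
  have hterm2 : ∀ n : ℕ,
      ‖(((2 * n + 1).factorial : ℝ)⁻¹) • (A ^ n * ηN) - (((2 * n + 1).factorial : ℝ)⁻¹) • (B ^ n * η)‖
        ≤ 2 * M ^ 2 * D * ((2 * M ^ 2) ^ n / n.factorial) := by
    intro n
    rw [← smul_sub, norm_smul, Real.norm_eq_abs, habs3 n]
    have hid : A ^ n * ηN - B ^ n * η = (A ^ n - B ^ n) * ηN + B ^ n * (ηN - η) := by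
      noncomm_ring
    have hinner : ‖A ^ n * ηN - B ^ n * η‖
        ≤ (n : ℝ) * (M ^ 2) ^ n * (2 * M * D) * M + (M ^ 2) ^ n * D := by
      rw [hid]
      refine le_trans (norm_add_le _ _) (add_le_add ?_ ?_)
      · exact le_trans (norm_mul_le _ _)
          (mul_le_mul (clm_pow_sub_pow_le hc1 A B hAn hBn hABd n) hNle (norm_nonneg _)
            (by positivity))
      · exact le_trans (norm_mul_le _ _)
          (mul_le_mul (clm_norm_pow_le hc1 B hBn n) hdiff (norm_nonneg _) (by positivity))
    calc ((2 * n + 1).factorial : ℝ)⁻¹ * ‖A ^ n * ηN - B ^ n * η‖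
        ≤ (n.factorial : ℝ)⁻¹ * ((n : ℝ) * (M ^ 2) ^ n * (2 * M * D) * M + (M ^ 2) ^ n * D) :=
          mul_le_mul (hfact3 n) hinner (norm_nonneg _) (by positivity)
      _ ≤ (n.factorial : ℝ)⁻¹ * ((2 * M ^ 2) * ((n:ℝ) + 1) * ((M ^ 2) ^ n * D)) := by
          have hPD : (0:ℝ) ≤ (M ^ 2) ^ n * D := by positivity
          have : (n : ℝ) * (M ^ 2) ^ n * (2 * M * D) * M + (M ^ 2) ^ n * D
              ≤ (2 * M ^ 2) * ((n:ℝ) + 1) * ((M ^ 2) ^ n * D) := by nlinarith [hPD, hc1, hD0]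
          gcongr
      _ ≤ (n.factorial : ℝ)⁻¹ * ((2 * M ^ 2) * (2:ℝ) ^ n * ((M ^ 2) ^ n * D)) := by
          have := h2pow n
          gcongr
      _ = 2 * M ^ 2 * D * ((2 * M ^ 2) ^ n / n.factorial) := by
          rw [mul_pow]; ring
  -- norms of the operator differences
  have hcoshdiff : ‖coshOp ηN ηNbar - coshOp η ηbar‖ ≤ 2 * M * D * E := by
    rw [coshOp, coshOp, ← hAdef, ← hBdef, ← Summable.tsum_sub hAsum hBsum]
    exact tsum_of_norm_bounded (hEsum.hasSum.mul_left (2 * M * D)) hterm1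
  have hsinhdiff : ‖sinhOp ηN ηNbar - sinhOp η ηbar‖ ≤ 2 * M ^ 2 * D * E := by
    rw [sinhOp, sinhOp, ← hAdef, ← hBdef, ← Summable.tsum_sub hAsum' hBsum']
    exact tsum_of_norm_bounded (hEsum.hasSum.mul_left (2 * M ^ 2 * D)) hterm2
  -- conclusion
  have hsplit : (coshOp ηN ηNbar) v + (sinhOp ηN ηNbar) vb
      - ((coshOp η ηbar) v + (sinhOp η ηbar) vb)
      = (coshOp ηN ηNbar - coshOp η ηbar) v + (sinhOp ηN ηNbar - sinhOp η ηbar) vb := by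
    simp only [ContinuousLinearMap.sub_apply]
    abel
  rw [hsplit]
  calc ‖(coshOp ηN ηNbar - coshOp η ηbar) v + (sinhOp ηN ηNbar - sinhOp η ηbar) vb‖
      ≤ ‖(coshOp ηN ηNbar - coshOp η ηbar) v‖ + ‖(sinhOp ηN ηNbar - sinhOp η ηbar) vb‖ :=
        norm_add_le _ _
    _ ≤ ‖coshOp ηN ηNbar - coshOp η ηbar‖ * ‖v‖
        + ‖sinhOp ηN ηNbar - sinhOp η ηbar‖ * ‖vb‖ :=
        add_le_add (ContinuousLinearMap.le_opNorm _ _) (ContinuousLinearMap.le_opNorm _ _)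
    _ ≤ (2 * M * D * E) * ‖v‖ + (2 * M ^ 2 * D * E) * ‖v‖ := by
        rw [hvb]
        exact add_le_add (mul_le_mul_of_nonneg_right hcoshdiff (norm_nonneg _))
          (mul_le_mul_of_nonneg_right hsinhdiff (norm_nonneg _))
    _ = (2 * M + 2 * M ^ 2) * E * ‖v‖ * D := by ring
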